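/- For a finitely generated infinite group G with symmetric generating set S, the space D_p(G) of functions f : G → ℂ with ∑_{g∈G} |f(gs⁻¹) − f(g)|^p < ∞ for all s ∈ S, equipped with the norm ‖f‖_{D_p} = (∑_{s∈S} ∑_{g∈G} |f(gs⁻¹) − f(g)|^p + |f(e)|^p)^{1/p}, is a Banach space (complete normed space). -/

import Mathlib

open Filter Topology

namespace PHB

variable {G : Type*} [Group G]

/-- One Dirichlet term `‖f(gs⁻¹) − f(g)‖^p`. -/
noncomputable def dpTerm (p : ℝ) (f : G → ℂ) (s g : G) : ℝ := ‖f (g * s⁻¹) - f g‖ ^ p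

/-- Membership in `D_p(G)`. -/
def MemDp (p : ℝ) (S : Finset G) (f : G → ℂ) : Prop :=
  ∀ s ∈ S, Summable (dpTerm p f s)

/-- The Dirichlet `p`-sum `∑_{s∈S}∑_{g∈G} ‖f(gs⁻¹) − f(g)‖^p`. -/
noncomputable def dirSum (p : ℝ) (S : Finset G) (f : G → ℂ) : ℝ :=
  ∑ s ∈ S, ∑' g, dpTerm p f s g

/-- The `D_p`-norm `(∑_{s,g}|f(gs⁻¹)−f(g)|^p + |f(e)|^p)^{1/p}`. -/
noncomputable def dpNorm (p : ℝ) (S : Finset G) (f : G → ℂ) : ℝ :=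
  (dirSum p S f + ‖f 1‖ ^ p) ^ (1/p)

/-- The norm on `D_p(G)/ℂ`: `(∑_{s,g}|f(gs⁻¹)−f(g)|^p)^{1/p}`. -/
noncomputable def qNorm (p : ℝ) (S : Finset G) (f : G → ℂ) : ℝ :=
  dirSum p S f ^ (1/p)

/-- Boundedness of a function. -/
def BddFun (f : G → ℂ) : Prop := ∃ M : ℝ, ∀ g, ‖f g‖ ≤ M

/-- The sup norm. -/
noncomputable def supNorm (f : G → ℂ) : ℝ := ⨆ g, ‖f g‖

/-- The `BD_p`-norm `‖f‖_∞ + (∑_{s,g}|f(gs⁻¹)−f(g)|^p)^{1/p}`. -/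
noncomputable def bdpNorm (p : ℝ) (S : Finset G) (f : G → ℂ) : ℝ :=
  supNorm f + dirSum p S f ^ (1/p)

/-- Membership in `BD_p(G)`: bounded and finite Dirichlet `p`-sum. -/
def MemBDp (p : ℝ) (S : Finset G) (f : G → ℂ) : Prop := BddFun f ∧ MemDp p S f

/-- Membership in `ℓ^p(G)`. -/
def MemLp' (p : ℝ) (f : G → ℂ) : Prop := Summable fun g => ‖f g‖ ^ p

/-- `f` lies in the `D_p`-closure of the finitely supported functions `ℂG`. -/
def InClosCG (p : ℝ) (S : Finset G) (f : G → ℂ) : Prop :=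
  MemDp p S f ∧ ∀ ε : ℝ, 0 < ε →
    ∃ h : G → ℂ, (Function.support h).Finite ∧ dpNorm p S (f - h) < ε

/-- `f` is a bounded function in the `D_p`-closure of `ℂG`. -/
def InBClosCG (p : ℝ) (S : Finset G) (f : G → ℂ) : Prop := BddFun f ∧ InClosCG p S f

/-- `f` lies in the `D_p`-closure of `ℓ^p(G)`. -/
def InClosLp (p : ℝ) (S : Finset G) (f : G → ℂ) : Prop :=
  MemDp p S f ∧ ∀ ε : ℝ, 0 < ε →
    ∃ h : G → ℂ, MemLp' p h ∧ dpNorm p S (f - h) < ε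

/-- `f` is a bounded function in the `D_p`-closure of `ℓ^p(G)`. -/
def InBClosLp (p : ℝ) (S : Finset G) (f : G → ℂ) : Prop := BddFun f ∧ InClosLp p S f

/-- `f` lies in the `D_p`-closure of `ℓ^p(G) ⊕ ℂ`. -/
def InClosLpC (p : ℝ) (S : Finset G) (f : G → ℂ) : Prop :=
  MemDp p S f ∧ ∀ ε : ℝ, 0 < ε →
    ∃ (h : G → ℂ) (c : ℂ), MemLp' p h ∧ dpNorm p S (f - h - Function.const G c) < ε

/-- A character (nonzero multiplicative linear functional) on `BD_p(G)`. -/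
structure BDpChar (p : ℝ) (S : Finset G) where
  toFun : {f : G → ℂ // MemBDp p S f} → ℂ
  map_add : ∀ (f h : {f : G → ℂ // MemBDp p S f}) (hm : MemBDp p S (f.1 + h.1)),
    toFun ⟨f.1 + h.1, hm⟩ = toFun f + toFun h
  map_mul : ∀ (f h : {f : G → ℂ // MemBDp p S f}) (hm : MemBDp p S (f.1 * h.1)),
    toFun ⟨f.1 * h.1, hm⟩ = toFun f * toFun h
  map_smul : ∀ (c : ℂ) (f : {f : G → ℂ // MemBDp p S f}) (hm : MemBDp p S (c • f.1)),
    toFun ⟨c • f.1, hm⟩ = c * toFun f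
  map_one : ∀ hm : MemBDp p S (1 : G → ℂ), toFun ⟨1, hm⟩ = 1

/-- The weak-* topology on the spectrum `Sp(BD_p(G))`. -/
noncomputable instance (p : ℝ) (S : Finset G) : TopologicalSpace (BDpChar p S) :=
  TopologicalSpace.induced BDpChar.toFun Pi.topologicalSpace

/-- The evaluation embedding `i : G → Sp(BD_p(G))`, `(i g)(f) = f(g)`. -/
def evalChar (p : ℝ) (S : Finset G) (g : G) : BDpChar p S where
  toFun := fun f => f.1 g
  map_add := fun _ _ _ => rfl
  map_mul := fun _ _ _ => rfl
  map_smul := fun _ _ _ => rfl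
  map_one := fun _ => rfl

/-- The `p`-Laplacian `Δ_p f(g) = ∑_{s∈S} |f(gs⁻¹)−f(g)|^{p−2}(f(gs⁻¹)−f(g))`. -/
noncomputable def pLap (p : ℝ) (S : Finset G) (f : G → ℂ) (g : G) : ℂ :=
  ∑ s ∈ S, ((‖f (g * s⁻¹) - f g‖ ^ (p - 2) : ℝ) : ℂ) * (f (g * s⁻¹) - f g)

/-- `f` is `p`-harmonic: `f ∈ D_p(G)` and `Δ_p f ≡ 0`. -/
def PHarmonic (p : ℝ) (S : Finset G) (f : G → ℂ) : Prop :=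
  MemDp p S f ∧ ∀ g, pLap p S f g = 0

/-- The `p`-harmonic boundary `∂_p(G) ⊆ Sp(BD_p(G)) \ G`. -/
def pBoundary (p : ℝ) (S : Finset G) : Set (BDpChar p S) :=
  {x | (∀ g : G, x ≠ evalChar p S g) ∧
    ∀ (f : G → ℂ) (hf : MemBDp p S f), InBClosCG p S f → x.toFun ⟨f, hf⟩ = 0}

/-- The word metric on `G` with respect to the generating set `S`. -/
noncomputable def wordDist (S : Finset G) (x y : G) : ℕ :=
  sInf {n | ∃ l : List G, (∀ a ∈ l, a ∈ S) ∧ l.length = n ∧ x⁻¹ * y = l.prod}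

/-- The word length `|g| = d(e,g)`. -/
noncomputable def wordLen (S : Finset G) (g : G) : ℕ := wordDist S 1 g

/-- Right translation `f_x(g) = f(gx⁻¹)`. -/
def translateFun (f : G → ℂ) (x : G) : G → ℂ := fun g => f (g * x⁻¹)

/-- `φ : G → H` is a rough isometry with constants `a, b, c` for the word metrics. -/
def RoughIsom {G H : Type*} [Group G] [Group H] (S : Finset G) (T : Finset H)
    (φ : G → H) (a b c : ℝ) : Prop :=
  1 ≤ a ∧ 0 ≤ b ∧ 0 < c ∧
  (∀ x y : G, (1/a) * (wordDist S x y : ℝ) - b ≤ (wordDist T (φ x) (φ y) : ℝ) ∧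
    (wordDist T (φ x) (φ y) : ℝ) ≤ a * (wordDist S x y : ℝ) + b) ∧
  ∀ h : H, ∃ x : G, (wordDist T (φ x) h : ℝ) < c

/-- `S` is a symmetric generating set of `G`. -/
def SymmGen (S : Finset G) : Prop :=
  (∀ s ∈ S, s⁻¹ ∈ S) ∧ Subgroup.closure (S : Set G) = ⊤

end PHB

namespace DpBanachAux

open PHB Filter Topology

variable {G : Type*} [Group G]

lemma hasSum_sumType {β γ : Type*} {f : β ⊕ γ → ℝ} {a b : ℝ}
    (ha : HasSum (fun x => f (Sum.inl x)) a) (hb : HasSum (fun x => f (Sum.inr x)) b) :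
    HasSum f (a + b) :=
  HasSum.add_isCompl Set.isCompl_range_inl_range_inr
    (Sum.inl_injective.hasSum_range_iff.mpr ha)
    (Sum.inr_injective.hasSum_range_iff.mpr hb)

/-- The master vector of `f`: all Dirichlet differences plus the value at `1`. -/
noncomputable def Phi (S : Finset G) (f : G → ℂ) : (↥S × G) ⊕ Unit → ℂ :=
  Sum.elim (fun x => f (x.2 * (x.1 : G)⁻¹) - f x.2) fun _ => f 1

lemma Phi_sub (S : Finset G) (f h : G → ℂ) : Phi S (f - h) = Phi S f - Phi S h := by
  funext i
  cases i with
  | inl x => simp only [Phi, Sum.elim_inl, Pi.sub_apply]; ring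
  | inr x => simp only [Phi, Sum.elim_inr, Pi.sub_apply]

lemma Phi_add (S : Finset G) (f h : G → ℂ) : Phi S (f + h) = Phi S f + Phi S h := by
  funext i
  cases i with
  | inl x => simp only [Phi, Sum.elim_inl, Pi.add_apply]; ring
  | inr x => simp only [Phi, Sum.elim_inr, Pi.add_apply]

variable {p : ℝ}

lemma phiTerm_nonneg (S : Finset G) (f : G → ℂ) :
    ∀ x : ↥S × G, 0 ≤ ‖Phi S f (Sum.inl x)‖ ^ p :=
  fun _ => Real.rpow_nonneg (norm_nonneg _) _

lemma summable_inl {S : Finset G} {f : G → ℂ} (hf : MemDp p S f) :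
    Summable fun x : ↥S × G => ‖Phi S f (Sum.inl x)‖ ^ p := by
  rw [summable_prod_of_nonneg (phiTerm_nonneg S f)]
  refine ⟨fun s => hf s.1 s.2, Summable.of_finite⟩

lemma hasSum_inl {S : Finset G} {f : G → ℂ} (hf : MemDp p S f) :
    HasSum (fun x : ↥S × G => ‖Phi S f (Sum.inl x)‖ ^ p) (dirSum p S f) := by
  have hs := summable_inl (p := p) hf
  have ht : (∑' x : ↥S × G, ‖Phi S f (Sum.inl x)‖ ^ p) = dirSum p S f := by
    rw [Summable.tsum_prod' hs fun b => hf b.1 b.2, tsum_fintype]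
    exact Finset.sum_coe_sort S fun s => ∑' g, dpTerm p f s g
  exact ht ▸ hs.hasSum

lemma hasSum_phi {S : Finset G} {f : G → ℂ} (hf : MemDp p S f) :
    HasSum (fun i => ‖Phi S f i‖ ^ p) (dirSum p S f + ‖f 1‖ ^ p) := by
  have h2 := hasSum_fintype fun x : Unit => ‖Phi S f (Sum.inr x)‖ ^ p
  rw [Fintype.sum_unique] at h2
  exact hasSum_sumType (hasSum_inl hf) h2

variable (hp : 0 < p)
include hp

lemma toReal_ofReal' : (ENNReal.ofReal p).toReal = p := ENNReal.toReal_ofReal hp.le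

lemma memℓp_phi {S : Finset G} {f : G → ℂ} (hf : MemDp p S f) :
    Memℓp (Phi S f) (ENNReal.ofReal p) := by
  apply memℓp_gen
  rw [toReal_ofReal' hp]
  exact (hasSum_phi hf).summable

lemma memDp_of_memℓp {S : Finset G} {f : G → ℂ}
    (h : Memℓp (Phi S f) (ENNReal.ofReal p)) : MemDp p S f := by
  rw [memℓp_gen_iff (by rw [toReal_ofReal' hp]; exact hp)] at h
  rw [toReal_ofReal' hp] at h
  intro s hs
  have h1 : Summable fun x : ↥S × G => ‖Phi S f (Sum.inl x)‖ ^ p :=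
    h.comp_injective Sum.inl_injective
  exact ((summable_prod_of_nonneg (phiTerm_nonneg S f)).mp h1).1 ⟨s, hs⟩

/-- The element of `lp` corresponding to `f`. -/
noncomputable def toLp (S : Finset G) (f : G → ℂ) (hf : MemDp p S f) :
    lp (fun _ : (↥S × G) ⊕ Unit => ℂ) (ENNReal.ofReal p) :=
  ⟨Phi S f, memℓp_phi hp hf⟩

lemma coe_toLp {S : Finset G} {f : G → ℂ} (hf : MemDp p S f) :
    ⇑(toLp hp S f hf) = Phi S f := rfl

lemma dpNorm_eq_norm_toLp {S : Finset G} {f : G → ℂ} (hf : MemDp p S f) :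
    dpNorm p S f = ‖toLp hp S f hf‖ := by
  rw [lp.norm_eq_tsum_rpow (by rw [toReal_ofReal' hp]; exact hp)]
  rw [toReal_ofReal' hp]
  have : (∑' i, ‖toLp hp S f hf i‖ ^ p) = dirSum p S f + ‖f 1‖ ^ p :=
    (hasSum_phi hf).tsum_eq
  rw [this, dpNorm]

omit hp in
lemma dirSum_nonneg (S : Finset G) (f : G → ℂ) : 0 ≤ dirSum p S f :=
  Finset.sum_nonneg fun _ _ => tsum_nonneg fun _ => Real.rpow_nonneg (norm_nonneg _) _

end DpBanachAux

open PHB DpBanachAux in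
/-- `D_p(G)` with the norm `(∑_{s,g}|f(gs⁻¹)−f(g)|^p + |f(e)|^p)^{1/p}`
is a Banach space: the norm axioms hold and every Cauchy sequence converges. -/
theorem Dp_is_Banach {G : Type*} [Group G] [Infinite G] (S : Finset G)
    (hS : PHB.SymmGen S) (p : ℝ) (hp : 1 ≤ p) :
    (∀ f : G → ℂ, PHB.MemDp p S f → (PHB.dpNorm p S f = 0 ↔ f = 0)) ∧
    (∀ (c : ℂ) (f : G → ℂ), PHB.MemDp p S f →
      PHB.dpNorm p S (c • f) = ‖c‖ * PHB.dpNorm p S f) ∧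
    (∀ f h : G → ℂ, PHB.MemDp p S f → PHB.MemDp p S h →
      PHB.dpNorm p S (f + h) ≤ PHB.dpNorm p S f + PHB.dpNorm p S h) ∧
    (∀ u : ℕ → (G → ℂ), (∀ n, PHB.MemDp p S (u n)) →
      (∀ ε : ℝ, 0 < ε → ∃ N : ℕ, ∀ m ≥ N, ∀ n ≥ N, PHB.dpNorm p S (u m - u n) < ε) →
      ∃ f : G → ℂ, PHB.MemDp p S f ∧
        Filter.Tendsto (fun n => PHB.dpNorm p S (u n - f)) Filter.atTop (nhds 0)) := by
  classical
  have hp0 : 0 < p := lt_of_lt_of_le one_pos hp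
  haveI : Fact (1 ≤ ENNReal.ofReal p) := ⟨ENNReal.one_le_ofReal.mpr hp⟩
  refine ⟨?_, ?_, ?_, ?_⟩
  · -- norm zero iff zero
    intro f hf
    constructor
    · intro h0
      have hn : ‖toLp hp0 S f hf‖ = 0 := by
        rw [← dpNorm_eq_norm_toLp hp0 hf]; exact h0
      have hz : toLp hp0 S f hf = 0 := norm_eq_zero.mp hn
      have hPhi : Phi S f = 0 := by
        have := congrArg Subtype.val hz
        simp [toLp] at this
        exact this
      have h1 : f 1 = 0 := by
        have := congrFun hPhi (Sum.inr ())
        simpa [Phi] using this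
      have hd : ∀ s ∈ S, ∀ g : G, f (g * s⁻¹) = f g := by
        intro s hs g
        have := congrFun hPhi (Sum.inl (⟨s, hs⟩, g))
        simp only [Phi, Sum.elim_inl, Pi.zero_apply] at this
        exact sub_eq_zero.mp this
      have key : ∀ g ∈ Subgroup.closure (S : Set G), ∀ x : G, f (x * g) = f x := by
        intro g hg
        induction hg using Subgroup.closure_induction with
        | mem s hs =>
          intro x
          have h2 := hd s hs (x * s)
          rw [mul_inv_cancel_right] at h2
          exact h2.symm
        | one => intro x; rw [mul_one]
        | mul a b ha hb iha ihb =>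
          intro x
          rw [← mul_assoc, ihb, iha]
        | inv a ha iha =>
          intro x
          have h2 := iha (x * a⁻¹)
          rw [inv_mul_cancel_right] at h2
          exact h2.symm
      funext g
      have hgmem : g ∈ Subgroup.closure (S : Set G) := by rw [hS.2]; trivial
      have h2 := key g hgmem 1
      rw [one_mul] at h2
      rw [Pi.zero_apply, h2, h1]
    · rintro rfl
      simp [PHB.dpNorm, PHB.dirSum, PHB.dpTerm, Real.zero_rpow hp0.ne',
        Real.zero_rpow (one_div_ne_zero hp0.ne'), Real.zero_rpow (inv_ne_zero hp0.ne')]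
  · -- homogeneity
    intro c f hf
    have ht : ∀ s g : G, dpTerm p (c • f) s g = ‖c‖ ^ p * dpTerm p f s g := by
      intro s g
      simp only [dpTerm, Pi.smul_apply, ← smul_sub, norm_smul]
      rw [Real.mul_rpow (norm_nonneg _) (norm_nonneg _)]
    have hds : dirSum p S (c • f) = ‖c‖ ^ p * dirSum p S f := by
      simp only [dirSum, ht, tsum_mul_left, Finset.mul_sum]
    have h1 : ‖(c • f) 1‖ ^ p = ‖c‖ ^ p * ‖f 1‖ ^ p := by
      rw [Pi.smul_apply, norm_smul, Real.mul_rpow (norm_nonneg _) (norm_nonneg _)]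
    rw [PHB.dpNorm, PHB.dpNorm, hds, h1, ← mul_add,
      Real.mul_rpow (Real.rpow_nonneg (norm_nonneg _) _)
        (add_nonneg (dirSum_nonneg S f) (Real.rpow_nonneg (norm_nonneg _) _)),
      one_div, Real.rpow_rpow_inv (norm_nonneg _) hp0.ne']
  · -- triangle inequality
    intro f h hf hh
    have hfh : MemDp p S (f + h) := memDp_of_memℓp hp0 (by
      rw [Phi_add]; exact (memℓp_phi hp0 hf).add (memℓp_phi hp0 hh))
    rw [dpNorm_eq_norm_toLp hp0 hf, dpNorm_eq_norm_toLp hp0 hh,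
      dpNorm_eq_norm_toLp hp0 hfh]
    have he : toLp hp0 S (f + h) hfh = toLp hp0 S f hf + toLp hp0 S h hh := by
      refine lp.ext ?_
      rw [lp.coeFn_add, coe_toLp hp0, coe_toLp hp0, coe_toLp hp0, Phi_add]
    rw [he]
    exact norm_add_le _ _
  · -- completeness
    intro u hu hcau
    let Ψ : ℕ → lp (fun _ : (↥S × G) ⊕ Unit => ℂ) (ENNReal.ofReal p) :=
      fun n => toLp hp0 S (u n) (hu n)
    have hΨcoe : ∀ n, ⇑(Ψ n) = Phi S (u n) := fun n => rfl
    have hsub : ∀ m n : ℕ, MemDp p S (u m - u n) := fun m n =>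
      memDp_of_memℓp hp0 (by
        rw [Phi_sub]; exact (memℓp_phi hp0 (hu m)).sub (memℓp_phi hp0 (hu n)))
    have hΨsub : ∀ m n : ℕ, toLp hp0 S (u m - u n) (hsub m n) = Ψ m - Ψ n := by
      intro m n
      refine lp.ext ?_
      rw [lp.coeFn_sub, coe_toLp hp0, Phi_sub, hΨcoe, hΨcoe]
    have hΨc : CauchySeq Ψ := by
      rw [Metric.cauchySeq_iff]
      intro ε hε
      obtain ⟨N, hN⟩ := hcau ε hε
      exact ⟨N, fun m hm n hn => by
        rw [dist_eq_norm, ← hΨsub m n, ← dpNorm_eq_norm_toLp hp0 (hsub m n)]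
        exact hN m hm n hn⟩
    obtain ⟨L, hL⟩ := cauchySeq_tendsto_of_complete hΨc
    have hnorm0 : Tendsto (fun n => ‖Ψ n - L‖) atTop (nhds 0) :=
      tendsto_iff_norm_sub_tendsto_zero.mp hL
    have hcomp : ∀ i, Tendsto (fun n => Phi S (u n) i) atTop (nhds (L i)) := by
      intro i
      rw [tendsto_iff_norm_sub_tendsto_zero]
      refine squeeze_zero (fun n => norm_nonneg _) (fun n => ?_) hnorm0
      have h1 : ‖(Ψ n - L) i‖ ≤ ‖Ψ n - L‖ :=
        lp.norm_apply_le_norm (ENNReal.ofReal_pos.mpr hp0).ne' (Ψ n - L) i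
      have h2 : (Ψ n - L) i = Phi S (u n) i - L i := by
        rw [lp.coeFn_sub, Pi.sub_apply, hΨcoe]
      rwa [h2] at h1
    have hkey : ∀ g ∈ Subgroup.closure (S : Set G), ∀ x : G,
        CauchySeq fun n => u n (x * g) - u n x := by
      intro g hg
      induction hg using Subgroup.closure_induction with
      | mem s hs =>
        intro x
        have h2 : CauchySeq fun n => u n x - u n (x * s) := by
          have h3 := (hcomp (Sum.inl (⟨s, hs⟩, x * s))).cauchySeq
          have h4 : (fun n => Phi S (u n) (Sum.inl (⟨s, hs⟩, x * s)))
              = fun n => u n x - u n (x * s) := by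
            funext n
            simp only [Phi, Sum.elim_inl, mul_inv_cancel_right]
          rwa [h4] at h3
        have h5 : CauchySeq fun n => -(u n x - u n (x * s)) := h2.neg
        have h6 : (fun n => -(u n x - u n (x * s)))
            = fun n => u n (x * s) - u n x := by
          funext n; rw [neg_sub]
        rwa [h6] at h5
      | one =>
        intro x
        have h2 : (fun n => u n (x * 1) - u n x) = fun _ => (0 : ℂ) := by
          funext n; rw [mul_one, sub_self]
        rw [h2]
        exact cauchySeq_const 0
      | mul a b ha hb iha ihb =>
        intro x
        have h2 : CauchySeq fun n =>
            (u n (x * a * b) - u n (x * a)) + (u n (x * a) - u n x) :=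
          (ihb (x * a)).add (iha x)
        have h3 : (fun n => (u n (x * a * b) - u n (x * a)) + (u n (x * a) - u n x))
            = fun n => u n (x * (a * b)) - u n x := by
          funext n; rw [mul_assoc]; ring
        rwa [h3] at h2
      | inv a ha iha =>
        intro x
        have h2 : CauchySeq fun n => -(u n (x * a⁻¹ * a) - u n (x * a⁻¹)) :=
          (iha (x * a⁻¹)).neg
        have h3 : (fun n => -(u n (x * a⁻¹ * a) - u n (x * a⁻¹)))
            = fun n => u n (x * a⁻¹) - u n x := by
          funext n; rw [inv_mul_cancel_right, neg_sub]
        rwa [h3] at h2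
    have h1T : Tendsto (fun n => u n 1) atTop (nhds (L (Sum.inr ()))) :=
      hcomp (Sum.inr ())
    have hCauchyAll : ∀ g : G, CauchySeq fun n => u n g := by
      intro g
      have hgmem : g ∈ Subgroup.closure (S : Set G) := by rw [hS.2]; trivial
      have h2 : CauchySeq fun n => (u n (1 * g) - u n 1) + u n 1 :=
        (hkey g hgmem 1).add h1T.cauchySeq
      have h3 : (fun n => (u n (1 * g) - u n 1) + u n 1) = fun n => u n g := by
        funext n; rw [one_mul]; ring
      rwa [h3] at h2
    have hlim : ∀ g : G, ∃ l : ℂ, Tendsto (fun n => u n g) atTop (nhds l) :=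
      fun g => cauchySeq_tendsto_of_complete (hCauchyAll g)
    choose f hf using hlim
    have hPhiL : Phi S f = ⇑L := by
      funext i
      cases i with
      | inl x => exact tendsto_nhds_unique ((hf _).sub (hf _)) (hcomp (Sum.inl x))
      | inr x => exact tendsto_nhds_unique (hf 1) (hcomp (Sum.inr x))
    have hmemf : MemDp p S f := memDp_of_memℓp hp0 (by rw [hPhiL]; exact lp.memℓp L)
    refine ⟨f, hmemf, ?_⟩
    have hsubf : ∀ n, MemDp p S (u n - f) := fun n =>
      memDp_of_memℓp hp0 (by
        rw [Phi_sub]; exact (memℓp_phi hp0 (hu n)).sub (memℓp_phi hp0 hmemf))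
    have heq : ∀ n, dpNorm p S (u n - f) = ‖Ψ n - L‖ := by
      intro n
      rw [dpNorm_eq_norm_toLp hp0 (hsubf n)]
      congr 1
      refine lp.ext ?_
      rw [lp.coeFn_sub, coe_toLp hp0, Phi_sub, hΨcoe, hPhiL]
    rw [show (fun n => dpNorm p S (u n - f)) = fun n => ‖Ψ n - L‖ from funext heq]
    exact hnorm0
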